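/- arXiv:2005.08486 — 5 statements merged into one kernel-verified Lean document; each statement's English description precedes it below -/
import Mathlib

section
/- The 3×3 matrix K₃(i√8), where K₃(ρ) has entries ρ^|j-k|, has -3 as an eigenvalue of algebraic multiplicity 2 and geometric multiplicity 1, with eigenvector (1, -i√2, 1). -/
noncomputable def KMS (n : ℕ) (ρ : ℂ) : Matrix (Fin n) (Fin n) ℂ :=
  fun j k => ρ ^ (((j : ℤ) - (k : ℤ)).natAbs)

open Polynomial in
/-- K₃(i√8) has -3 as an eigenvalue of algebraic multiplicity 2 and
geometric multiplicity 1, with eigenvector (1, -i√2, 1). -/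
theorem stmt1 :
    (KMS 3 (Complex.I * Real.sqrt 8)).charpoly.rootMultiplicity (-3) = 2 ∧
    Module.finrank ℂ
      ↥(Module.End.eigenspace (Matrix.toLin' (KMS 3 (Complex.I * Real.sqrt 8))) (-3)) = 1 ∧
    (![1, -Complex.I * Real.sqrt 2, 1] : Fin 3 → ℂ) ≠ 0 ∧
    (KMS 3 (Complex.I * Real.sqrt 8)).mulVec ![1, -Complex.I * Real.sqrt 2, 1]
      = (-3 : ℂ) • ![1, -Complex.I * Real.sqrt 2, 1] := by
  have h8 : ((Real.sqrt 8 : ℝ) : ℂ)^2 = 8 := by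
    rw [← Complex.ofReal_pow, Real.sq_sqrt (by norm_num : (0:ℝ) ≤ 8)]
    norm_num
  have hρ : ((Complex.I * (Real.sqrt 8 : ℝ)))^2 = -8 := by
    rw [mul_pow, Complex.I_sq, h8]; ring
  have hs8 : ((Real.sqrt 8 : ℝ) : ℂ) = 2 * ((Real.sqrt 2 : ℝ) : ℂ) := by
    have : (8:ℝ) = 2^2 * 2 := by norm_num
    rw [this, Real.sqrt_mul (by positivity), Real.sqrt_sq (by norm_num)]
    push_cast; ring
  have h2 : ((Real.sqrt 2 : ℝ) : ℂ)^2 = 2 := by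
    rw [← Complex.ofReal_pow, Real.sq_sqrt (by norm_num : (0:ℝ) ≤ 2)]
    norm_num
  have hI : (Complex.I)^2 = -1 := Complex.I_sq
  have hIs : (Complex.I * (2 * ((Real.sqrt 2 : ℝ) : ℂ)))^2 = -8 := by
    rw [← hs8, hρ]
  -- the eigenvector equation (part 4)
  have hvec : (KMS 3 (Complex.I * Real.sqrt 8)).mulVec ![1, -Complex.I * Real.sqrt 2, 1]
      = (-3 : ℂ) • ![1, -Complex.I * Real.sqrt 2, 1] := by
    funext i
    fin_cases i <;>
    · simp only [Matrix.mulVec, dotProduct, Fin.sum_univ_three, KMS,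
        Matrix.cons_val_zero, Matrix.cons_val_one, Matrix.head_cons, Matrix.cons_val_two,
        Matrix.tail_cons, Pi.smul_apply, smul_eq_mul, Fin.isValue]
      norm_num [hs8]
      first
      | linear_combination (2*Complex.I^2)*h2 + 4*hI
      | ring
  -- the vector is nonzero
  have hv : (![1, -Complex.I * Real.sqrt 2, 1] : Fin 3 → ℂ) ≠ 0 := by
    intro h
    have := congrFun h 0
    simp at this
  -- charpoly
  have hchar : (KMS 3 (Complex.I * Real.sqrt 8)).charpoly = (X - 9) * (X + 3)^2 := by
    have hC : (C Complex.I * C (((Real.sqrt 8 : ℝ)) : ℂ))^2 = (-8 : ℂ[X]) := by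
      rw [← C_mul, ← C_pow, hρ, map_neg, map_ofNat]
    rw [Matrix.charpoly, Matrix.det_fin_three]
    simp only [Matrix.charmatrix_apply, KMS]
    norm_num [hρ, Matrix.diagonal, Matrix.of_apply, map_ofNat]
    norm_num [Fin.ext_iff]
    linear_combination (18 - 2*(X:ℂ[X])) * hC
  refine ⟨?_, ?_, hv, hvec⟩
  · rw [hchar]
    have hconv : ((X:ℂ[X]) - 9) * (X + 3)^2 = (X - C 9) * (X - C (-3))^2 := by
      simp [map_ofNat]
    rw [hconv, Polynomial.rootMultiplicity_mul (by
        apply mul_ne_zero (Polynomial.X_sub_C_ne_zero 9)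
        exact pow_ne_zero 2 (Polynomial.X_sub_C_ne_zero (-3)))]
    rw [Polynomial.rootMultiplicity_eq_zero (by
        intro h
        simp [Polynomial.IsRoot] at h
        norm_num at h)]
    rw [Polynomial.rootMultiplicity_X_sub_C_pow]
  · -- eigenspace = span of v
    set v : Fin 3 → ℂ := ![1, -Complex.I * Real.sqrt 2, 1] with hvdef
    have heq : Module.End.eigenspace (Matrix.toLin' (KMS 3 (Complex.I * Real.sqrt 8))) (-3)
        = Submodule.span ℂ {v} := by
      apply le_antisymm
      · intro x hx
        rw [Module.End.mem_eigenspace_iff, Matrix.toLin'_apply] at hx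
        have hx0 := congrFun hx 0
        have hx1 := congrFun hx 1
        have hx2 := congrFun hx 2
        simp only [Matrix.mulVec, dotProduct, Fin.sum_univ_three, KMS,
          Pi.smul_apply, smul_eq_mul, Fin.isValue] at hx0 hx1 hx2
        norm_num [hs8] at hx0 hx1 hx2
        rw [hIs] at hx0 hx2
        rw [Submodule.mem_span_singleton]
        refine ⟨x 0, ?_⟩
        have e2 : x 2 = x 0 := by linear_combination (hx2 - hx0) / 12
        have e1 : x 1 = -Complex.I * (Real.sqrt 2 : ℝ) * x 0 := by
          linear_combination hx1/4 - (Complex.I * ((Real.sqrt 2:ℝ):ℂ) / 2) * e2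
        funext i
        fin_cases i
        · simp [hvdef]
        · simp [hvdef]; linear_combination -e1
        · simp [hvdef]; exact e2.symm
      · rw [Submodule.span_le, Set.singleton_subset_iff, SetLike.mem_coe,
          Module.End.mem_eigenspace_iff, Matrix.toLin'_apply]
        exact hvec
    rw [heq, finrank_span_singleton hv]
end

section
/- Let n ≥ 2, ρ ∈ ℂ, and μ ∈ ℂ with sin μ ≠ 0. Suppose ρ = sin((n+1)μ/2)/sin((n-1)μ/2) (with sin((n-1)μ/2) ≠ 0). Then λ = -sin(nμ)/sin(μ) is an eigenvalue of the n×n matrix Kₙ(ρ) = [ρ^|j-k|], with eigenvector v whose j-th component (0 ≤ j ≤ n-1) is v_j = sin(μ(j - (n-1)/2)). -/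
set_option maxHeartbeats 1000000 in
lemma kms_key (ρ w t a P Q lam G1 G2 H1 H2 : ℂ)
    (hw : w ≠ 0) (ht : t ≠ 0) (ha : a ≠ 0)
    (hw4 : w^4 - 1 ≠ 0) (htw : t^2 - w^2 ≠ 0)
    (hrho : ρ * (t^2 - w^2) = t^2*w^2 - 1)
    (hlam : lam * (t^2*(w^4-1)) = -((t^4-1)*w^2))
    (hG1 : G1 * (ρ*w^2 - 1) = P*(a*w^2) - 1)
    (hG2 : G2 * (ρ/w^2 - 1) = P/(a*w^2) - 1)
    (hH1 : H1 * (ρ*w^2 - 1) = Q*(t^2/(a*w^2)) - 1)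
    (hH2 : H2 * (ρ/w^2 - 1) = Q*((a*w^2)/t^2) - 1) :
    ((a*w/t) * (G2 + (ρ*w^2)*H1) - (a*w/t)⁻¹ * (G1 + (ρ/w^2)*H2)) / (2*Complex.I)
      = lam * ((a*w/t - (a*w/t)⁻¹)/(2*Complex.I)) := by
  have ht2 : t^2 ≠ 0 := pow_ne_zero 2 ht
  have hw2 : w^2 ≠ 0 := pow_ne_zero 2 hw
  have e1 : (ρ*w^2 - 1)*(t^2-w^2) = t^2*(w^4-1) := by linear_combination w^2*hrho
  have e2 : (ρ - w^2)*(t^2-w^2) = w^4-1 := by linear_combination hrho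
  have hq1 : ρ*w^2 - 1 ≠ 0 := by
    intro h
    apply hw4
    have h2 : t^2*(w^4-1) = 0 := by rw [← e1, h, zero_mul]
    exact (mul_eq_zero.mp h2).resolve_left ht2
  have hq2 : ρ - w^2 ≠ 0 := by
    intro h
    apply hw4
    rw [← e2, h, zero_mul]
  have hG2' : G2 * ((ρ - w^2) * (a*w^2)) = (P - a*w^2)*w^2 := by
    calc G2 * ((ρ - w^2) * (a*w^2)) = (G2*(ρ/w^2-1))*((a*w^2)*w^2) := by
          field_simp
      _ = (P/(a*w^2) - 1)*((a*w^2)*w^2) := by rw [hG2]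
      _ = (P - a*w^2)*w^2 := by field_simp
  have hH1' : H1 * ((ρ*w^2 - 1) * (a*w^2)) = (Q*t^2 - a*w^2) := by
    calc H1 * ((ρ*w^2 - 1) * (a*w^2)) = (H1*(ρ*w^2-1))*(a*w^2) := by ring
      _ = (Q*(t^2/(a*w^2)) - 1)*(a*w^2) := by rw [hH1]
      _ = (Q*t^2 - a*w^2) := by field_simp
  have hH2' : H2 * ((ρ - w^2) * t^2) = (Q*(a*w^2) - t^2)*w^2 := by
    calc H2 * ((ρ - w^2) * t^2) = (H2*(ρ/w^2-1))*(w^2*t^2) := by field_simp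
      _ = (Q*((a*w^2)/t^2) - 1)*(w^2*t^2) := by rw [hH2]
      _ = (Q*(a*w^2) - t^2)*w^2 := by field_simp
  have hbase : (a*w)^2*w^2*(G2+(ρ*w^2)*H1) - t^2*(w^2*G1 + ρ*H2)
      = lam*((a*w)^2*w^2 - t^2*w^2) := by
    apply mul_left_cancel₀ (show (ρ*w^2-1)*(ρ-w^2)*(t^2-w^2)^2 ≠ 0 from
      mul_ne_zero (mul_ne_zero hq1 hq2) (pow_ne_zero 2 htw))
    linear_combination
      (-((t^2-w^2)^2*(ρ-w^2)*t^2*w^2)) * hG1 +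
      ((t^2-w^2)^2*(ρ*w^2-1)*a*w^2) * hG2' +
      ((t^2-w^2)^2*(ρ-w^2)*ρ*a*w^4) * hH1' +
      (-((t^2-w^2)^2*(ρ*w^2-1)*ρ)) * hH2' +
      (-((a^2*w^4 - t^2*w^2)*(w^4-1))) * hlam +
      (-(lam*(a^2*w^4-t^2*w^2)*(w^4-1))) * e1 +
      (-(lam*(a^2*w^4-t^2*w^2)*(ρ*w^2-1)*(t^2-w^2))) * e2 +
      (-(w^4*t^2) - w^4*t^4*a*P + w^6*a^2 + 2*w^6*t^2*a*P + w^6*t^4 - w^8*a*P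
        - w^8*t^2*a^2 + ρ*w^4*t^4 + ρ*w^4*t^4*a*Q - ρ*w^6*t^2 - 2*ρ*w^6*t^2*a*Q
        - ρ*w^6*t^2*a^2 + ρ*w^8*a*Q + ρ*w^8*a^2) * hrho
  have hstep : (a*w/t)*(G2+(ρ*w^2)*H1) - (a*w/t)⁻¹*(G1+(ρ/w^2)*H2)
      = lam*(a*w/t - (a*w/t)⁻¹) := by
    rw [inv_div]
    apply mul_left_cancel₀ (show t*(a*w)*w^2 ≠ 0 from
      mul_ne_zero (mul_ne_zero ht (mul_ne_zero ha hw)) hw2)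
    calc t*(a*w)*w^2*((a*w/t)*(G2+(ρ*w^2)*H1) - (t/(a*w))*(G1+(ρ/w^2)*H2))
        = (a*w)^2*w^2*(G2+(ρ*w^2)*H1) - t^2*(w^2*G1 + ρ*H2) := by
          field_simp
      _ = lam*((a*w)^2*w^2 - t^2*w^2) := hbase
      _ = t*(a*w)*w^2*(lam*(a*w/t - t/(a*w))) := by field_simp
  rw [hstep, mul_div_assoc]

set_option maxHeartbeats 2000000 in
/-- type-1 eigenpair: if sin μ ≠ 0 and
ρ = sin((n+1)μ/2)/sin((n-1)μ/2) with nonzero denominator, then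
λ = -sin(nμ)/sin μ is an eigenvalue of Kₙ(ρ) with eigenvector
v_j = sin(μ(j - (n-1)/2)), provided v ≠ 0. -/
theorem stmt4 (n : ℕ) (hn : 2 ≤ n) (ρ μ : ℂ) (hμ : Complex.sin μ ≠ 0)
    (hden : Complex.sin ((n - 1) * μ / 2) ≠ 0)
    (hρ : ρ = Complex.sin ((n + 1) * μ / 2) / Complex.sin ((n - 1) * μ / 2))
    (v : Fin n → ℂ)
    (hv : ∀ j : Fin n, v j = Complex.sin (μ * ((j : ℂ) - (n - 1) / 2)))
    (hv0 : v ≠ 0) :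
    (KMS n ρ).mulVec v = (-(Complex.sin (n * μ) / Complex.sin μ)) • v := by
  clear hv0
  have hI : (Complex.I : ℂ) ≠ 0 := Complex.I_ne_zero
  have h2I : (2*Complex.I : ℂ) ≠ 0 := by simp [Complex.I_ne_zero]
  set w : ℂ := Complex.exp (μ * Complex.I / 2) with hwdef
  have hw0 : w ≠ 0 := Complex.exp_ne_zero _
  have ht0 : w^n ≠ 0 := pow_ne_zero _ hw0
  -- exp lemmas
  have hexp : ∀ m : ℕ, Complex.exp ((m:ℂ) * (μ * Complex.I / 2)) = w ^ m := by
    intro m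
    rw [hwdef, ← Complex.exp_nat_mul]
  have hsin : ∀ c : ℂ, Complex.sin c
      = (Complex.exp (c * Complex.I) - (Complex.exp (c * Complex.I))⁻¹) / (2*Complex.I) := by
    intro c
    have he := Complex.exp_ne_zero (c * Complex.I)
    rw [Complex.sin, neg_mul, Complex.exp_neg]
    field_simp
    linear_combination (1 - Complex.exp (c*Complex.I)^2) * Complex.I_sq
  -- individual sine computations
  have e2 : Complex.exp (μ * Complex.I) = w^2 := by
    rw [← hexp 2]; congr 1; push_cast; ring
  have hsinμ : Complex.sin μ = (w^2 - (w^2)⁻¹)/(2*Complex.I) := by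
    rw [hsin μ, e2]
  have enμ : Complex.exp (((n:ℂ) * μ) * Complex.I) = (w^n)^2 := by
    rw [← pow_mul, ← hexp (n*2)]; congr 1; push_cast; ring
  have hsinnμ : Complex.sin ((n:ℂ)*μ) = ((w^n)^2 - ((w^n)^2)⁻¹)/(2*Complex.I) := by
    rw [hsin ((n:ℂ)*μ), enμ]
  have eplus : Complex.exp ((((n:ℂ)+1) * μ / 2) * Complex.I) = w^n * w := by
    rw [← pow_succ, ← hexp (n+1)]; congr 1; push_cast; ring
  have hsinp : Complex.sin (((n:ℂ)+1) * μ / 2) = (w^n*w - (w^n*w)⁻¹)/(2*Complex.I) := by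
    rw [hsin, eplus]
  have eminus : Complex.exp ((((n:ℂ)-1) * μ / 2) * Complex.I) = w^n / w := by
    rw [show (((n:ℂ)-1) * μ / 2) * Complex.I
        = (n:ℂ)*(μ*Complex.I/2) - (1:ℕ)*(μ*Complex.I/2) by push_cast; ring,
      Complex.exp_sub, hexp, hexp, pow_one]
  have hsinm : Complex.sin (((n:ℂ)-1) * μ / 2) = (w^n/w - (w^n/w)⁻¹)/(2*Complex.I) := by
    rw [hsin, eminus]
  -- eigenvector components
  have hvk : ∀ k : Fin n, v k
      = (w^(2*(k:ℕ))*w/w^n - (w^(2*(k:ℕ))*w/w^n)⁻¹)/(2*Complex.I) := by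
    intro k
    rw [hv k, hsin]
    have ek : Complex.exp ((μ * ((k:ℂ) - ((n:ℂ)-1)/2)) * Complex.I)
        = w^(2*(k:ℕ))*w/w^n := by
      rw [show (μ * ((k:ℂ) - ((n:ℂ)-1)/2)) * Complex.I
          = ((2*(k:ℕ)+1 : ℕ):ℂ)*(μ*Complex.I/2) - (n:ℂ)*(μ*Complex.I/2) by
            push_cast; ring,
        Complex.exp_sub, hexp, hexp, pow_succ, pow_mul]
    rw [ek]
  -- polynomial facts
  have hs2 : Complex.sin μ * ((2*Complex.I) * w^2) = w^4 - 1 := by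
    rw [hsinμ]; field_simp
  have hw4 : w^4 - 1 ≠ 0 := by
    intro h
    apply hμ
    have h0 : Complex.sin μ * ((2*Complex.I)*w^2) = 0 := by rw [hs2, h]
    exact (mul_eq_zero.mp h0).resolve_right (mul_ne_zero h2I (pow_ne_zero _ hw0))
  have hsm : Complex.sin (((n:ℂ)-1) * μ / 2) * ((2*Complex.I) * (w^n*w)) = (w^n)^2 - w^2 := by
    rw [hsinm, inv_div]; field_simp
  have htw : (w^n)^2 - w^2 ≠ 0 := by
    intro h
    apply hden
    have h0 : Complex.sin (((n:ℂ)-1) * μ / 2) * ((2*Complex.I)*(w^n*w)) = 0 := by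
      rw [hsm, h]
    exact (mul_eq_zero.mp h0).resolve_right (mul_ne_zero h2I (mul_ne_zero ht0 hw0))
  have hsp : Complex.sin (((n:ℂ)+1) * μ / 2) * ((2*Complex.I) * (w^n*w)) = (w^n)^2*w^2 - 1 := by
    rw [hsinp]; field_simp
  have hstep : ρ * Complex.sin (((n:ℂ)-1) * μ / 2) = Complex.sin (((n:ℂ)+1) * μ / 2) := by
    rw [hρ]; exact div_mul_cancel₀ _ hden
  have hrho : ρ * ((w^n)^2 - w^2) = (w^n)^2*w^2 - 1 := by
    rw [← hsm, ← hsp]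
    linear_combination ((2*Complex.I)*(w^n*w)) * hstep
  have hlam : (-(Complex.sin ((n:ℂ)*μ) / Complex.sin μ)) * ((w^n)^2*(w^4-1))
      = -(((w^n)^4-1)*w^2) := by
    have hs3 : Complex.sin ((n:ℂ)*μ) * ((2*Complex.I) * (w^n)^2) = (w^n)^4 - 1 := by
      rw [hsinnμ]; field_simp
    rw [← hs2, ← hs3]
    field_simp
  -- nonzero of geometric ratios
  have hq1ne : ρ*w^2 ≠ 1 := by
    intro h
    apply hw4
    have h2 : (w^n)^2*(w^4-1) = 0 := by
      linear_combination ((w^n)^2-w^2)*h - w^2*hrho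
    exact (mul_eq_zero.mp h2).resolve_left (pow_ne_zero _ ht0)
  have hq2ne : ρ/w^2 ≠ 1 := by
    intro h
    have h' : ρ = w^2 := by
      field_simp at h
      exact h
    apply hw4
    linear_combination ((w^n)^2-w^2)*h' - hrho
  funext j
  simp only [Matrix.mulVec, dotProduct, Pi.smul_apply, smul_eq_mul, KMS]
  have hj1 : (j:ℕ) + 1 ≤ n := j.isLt
  have hwn : ∀ m : ℕ, w^m ≠ 0 := fun m => pow_ne_zero m hw0
  have hsum1 : ∑ x : Fin n, ρ ^ ((((j:ℕ):ℤ) - ((x:ℕ):ℤ)).natAbs) * v x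
      = ∑ k ∈ Finset.range n, ρ ^ ((((j:ℕ):ℤ) - (k:ℤ)).natAbs)
          * ((w^(2*k)*w/w^n - (w^(2*k)*w/w^n)⁻¹)/(2*Complex.I)) := by
    rw [← Fin.sum_univ_eq_sum_range (fun k => ρ ^ ((((j:ℕ):ℤ) - (k:ℤ)).natAbs)
          * ((w^(2*k)*w/w^n - (w^(2*k)*w/w^n)⁻¹)/(2*Complex.I))) n]
    exact Finset.sum_congr rfl fun k _ => by rw [hvk k]
  rw [hsum1, hvk j]
  set f : ℕ → ℂ := fun k => ρ ^ ((((j:ℕ):ℤ) - (k:ℤ)).natAbs)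
      * ((w^(2*k)*w/w^n - (w^(2*k)*w/w^n)⁻¹)/(2*Complex.I)) with hf
  have hsplit : ∑ k ∈ Finset.range n, f k
      = (∑ i ∈ Finset.range ((j:ℕ)+1), f ((j:ℕ)+1-1-i))
        + ∑ i ∈ Finset.range (n-((j:ℕ)+1)), f ((j:ℕ)+1+i) := by
    have h0 := Finset.sum_Ico_consecutive f (Nat.zero_le ((j:ℕ)+1)) hj1
    simp only [← Finset.range_eq_Ico] at h0
    rw [← h0, Finset.sum_range_reflect, Finset.sum_Ico_eq_sum_range]
  have hq2p : ∀ i : ℕ, (ρ/w^2)^i = ρ^i / w^(2*i) := by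
    intro i; rw [div_pow, ← pow_mul]
  have hq1p : ∀ i : ℕ, (ρ*w^2)^i = ρ^i * w^(2*i) := by
    intro i; rw [mul_pow, ← pow_mul]
  have key1 : ∀ i ∈ Finset.range ((j:ℕ)+1), f ((j:ℕ)+1-1-i)
      = ((w^(2*(j:ℕ))*w/w^n) * (ρ/w^2)^i
          - (w^(2*(j:ℕ))*w/w^n)⁻¹ * (ρ*w^2)^i)/(2*Complex.I) := by
    intro i hi
    simp only [Finset.mem_range] at hi
    simp only [hf]
    have h1 : (j:ℕ)+1-1-i = (j:ℕ)-i := by omega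
    rw [h1]
    have hN : ((((j:ℕ)):ℤ) - (((j:ℕ)-i : ℕ):ℤ)).natAbs = i := by omega
    rw [hN]
    have hww : w^(2*((j:ℕ)-i)) = w^(2*(j:ℕ)) / w^(2*i) := by
      rw [eq_div_iff (hwn _), ← pow_add]; congr 1; omega
    rw [hww, hq2p, hq1p]
    field_simp
  have key2 : ∀ i ∈ Finset.range (n-((j:ℕ)+1)), f ((j:ℕ)+1+i)
      = (((w^(2*(j:ℕ))*w/w^n)*(ρ*w^2)) * (ρ*w^2)^i
          - ((w^(2*(j:ℕ))*w/w^n)⁻¹*(ρ/w^2)) * (ρ/w^2)^i)/(2*Complex.I) := by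
    intro i hi
    simp only [hf]
    have hN : ((((j:ℕ)):ℤ) - (((j:ℕ)+1+i : ℕ):ℤ)).natAbs = i+1 := by omega
    rw [hN]
    have hww : w^(2*((j:ℕ)+1+i)) = w^(2*(j:ℕ)) * w^(2*i) * w^2 := by
      rw [← pow_add, ← pow_add]; congr 1; omega
    rw [hww, hq2p, hq1p, pow_succ]
    field_simp
  have helper : ∀ (c d x y : ℂ) (m : ℕ),
      (∑ i ∈ Finset.range m, (c*x^i - d*y^i)/(2*Complex.I))
      = (c*(∑ i ∈ Finset.range m, x^i) - d*(∑ i ∈ Finset.range m, y^i))/(2*Complex.I) := by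
    intro c d x y m
    rw [Finset.mul_sum, Finset.mul_sum, ← Finset.sum_sub_distrib, ← Finset.sum_div]
  have hM : (w^2)^(n-((j:ℕ)+1)) = (w^n)^2/(w^(2*(j:ℕ))*w^2) := by
    rw [eq_div_iff (mul_ne_zero (hwn _) (hwn _))]
    simp only [← pow_mul, ← pow_add]
    congr 1; omega
  have hG1 : (∑ i ∈ Finset.range ((j:ℕ)+1), (ρ*w^2)^i) * (ρ*w^2 - 1)
      = ρ^((j:ℕ)+1)*(w^(2*(j:ℕ))*w^2) - 1 := by
    rw [geom_sum_mul, mul_pow, ← pow_mul, show 2*((j:ℕ)+1) = 2*(j:ℕ)+2 by ring, pow_add]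
    ring
  have hG2 : (∑ i ∈ Finset.range ((j:ℕ)+1), (ρ/w^2)^i) * (ρ/w^2 - 1)
      = ρ^((j:ℕ)+1)/(w^(2*(j:ℕ))*w^2) - 1 := by
    rw [geom_sum_mul, div_pow, ← pow_mul, show 2*((j:ℕ)+1) = 2*(j:ℕ)+2 by ring, pow_add]
    ring
  have hH1 : (∑ i ∈ Finset.range (n-((j:ℕ)+1)), (ρ*w^2)^i) * (ρ*w^2 - 1)
      = ρ^(n-((j:ℕ)+1))*((w^n)^2/(w^(2*(j:ℕ))*w^2)) - 1 := by
    rw [geom_sum_mul, mul_pow, hM]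
  have hH2 : (∑ i ∈ Finset.range (n-((j:ℕ)+1)), (ρ/w^2)^i) * (ρ/w^2 - 1)
      = ρ^(n-((j:ℕ)+1))*((w^(2*(j:ℕ))*w^2)/(w^n)^2) - 1 := by
    rw [geom_sum_mul, div_pow, hM, div_div_eq_mul_div, mul_div_assoc]
  have hq1sub : ρ*w^2 - 1 ≠ 0 := sub_ne_zero.mpr hq1ne
  have hq2sub : ρ/w^2 - 1 ≠ 0 := sub_ne_zero.mpr hq2ne
  have main := kms_key ρ w (w^n) (w^(2*(j:ℕ))) (ρ^((j:ℕ)+1)) (ρ^(n-((j:ℕ)+1)))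
    (-(Complex.sin ((n:ℂ)*μ) / Complex.sin μ))
    (∑ i ∈ Finset.range ((j:ℕ)+1), (ρ*w^2)^i)
    (∑ i ∈ Finset.range ((j:ℕ)+1), (ρ/w^2)^i)
    (∑ i ∈ Finset.range (n-((j:ℕ)+1)), (ρ*w^2)^i)
    (∑ i ∈ Finset.range (n-((j:ℕ)+1)), (ρ/w^2)^i)
    hw0 ht0 (hwn _) hw4 htw hrho hlam hG1 hG2 hH1 hH2
  rw [hsplit, Finset.sum_congr rfl key1, Finset.sum_congr rfl key2, helper, helper]
  linear_combination main
end

section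
/- Let n ≥ 2, ρ ∈ ℂ, and μ ∈ ℂ with sin μ ≠ 0. Suppose ρ = cos((n+1)μ/2)/cos((n-1)μ/2) (with cos((n-1)μ/2) ≠ 0). Then λ = sin(nμ)/sin(μ) is an eigenvalue of the n×n matrix Kₙ(ρ) = [ρ^|j-k|], with eigenvector v whose j-th component (0 ≤ j ≤ n-1) is v_j = cos(μ(j - (n-1)/2)). -/
set_option maxHeartbeats 1000000 in
lemma rowkey (a b s t u w p q ρ lam SA SB SC SD vj : ℂ)
    (hab : a*b = 1) (hst : s*t = 1)
    (hG1 : ρ*(s+t) = s*a + t*b)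
    (hG2 : lam*(a-b) = s^2*a - t^2*b)
    (hgA : SA*(ρ*a-1) = ρ*p*(a*u) - 1)
    (hgB : SB*(ρ*b-1) = ρ*p*(b*w) - 1)
    (hgC : SC*(ρ*a-1) = q*(s^2*w) - 1)
    (hgD : SD*(ρ*b-1) = q*(t^2*u) - 1)
    (hvj : 2*vj = u*t + w*s) :
    2*(a-b)*(s+t)^2*((ρ*a-1)*(ρ*b-1)) * (u*t/2*SB + w*s/2*SA + ρ*(u*a*t/2*SC + w*b*s/2*SD))
    = 2*(a-b)*(s+t)^2*((ρ*a-1)*(ρ*b-1)) * (lam * vj) := by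
  linear_combination ((-1)*b*t^3*u + (-1)*b*t^5*u + (-1)*b*s*t^2*w + (2)*b*s*t^2*u + (-1)*b*s*t^4*w + (2)*b*s^2*t*w + (-1)*b*s^2*t^3*u + (-1)*b*s^3*t^2*w + (1)*b*s^3*t^2*u + (1)*b*s^4*t*w + (1)*b^3*t^3*u + (-1)*b^3*t^3*u*w*p + (1)*b^3*t^5*u + (1)*b^3*s*t^2*w + (-1)*b^3*s*t^2*u*w*p + (1)*b^3*s*t^4*w + (-1)*b^3*s*t^4*u*w*q + (-1)*b^3*s^2*t^3*u*w*q + (-2)*a*s*t^2*u + (-1)*a*s*t^4*u + (-2)*a*s^2*t*w + (1)*a*s^2*t*u + (-1)*a*s^2*t^3*w + (1)*a*s^2*t^3*u + (1)*a*s^3*w + (1)*a*s^3*t^2*w + (1)*a*s^4*t*u + (1)*a*s^5*w + (-1)*a*b^2*t^3*u + (1)*a*b^2*t^3*u*w*p + (-1)*a*b^2*s*t^2*w + (2)*a*b^2*s*t^2*u + (-1)*a*b^2*s*t^2*u*w*p + (2)*a*b^2*s*t^4*u + (1)*a*b^2*s*t^4*u*w*q + (2)*a*b^2*s^2*t*w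 + (-2)*a*b^2*s^2*t*u*w*p + (2)*a*b^2*s^2*t^3*w + (-1)*a*b^2*s^2*t^3*u + (-1)*a*b^2*s^2*t^3*u*w*q + (-1)*a*b^2*s^3*t^2*w + (-2)*a*b^2*s^3*t^2*u*w*q + (-2)*a^2*b*s*t^2*u + (2)*a^2*b*s*t^2*u*w*p + (-2)*a^2*b*s^2*t*w + (1)*a^2*b*s^2*t*u + (1)*a^2*b*s^2*t*u*w*p + (1)*a^2*b*s^2*t^3*u + (2)*a^2*b*s^2*t^3*u*w*q + (1)*a^2*b*s^3*w + (-1)*a^2*b*s^3*u*w*p + (1)*a^2*b*s^3*t^2*w + (-2)*a^2*b*s^3*t^2*u + (1)*a^2*b*s^3*t^2*u*w*q + (-2)*a^2*b*s^4*t*w + (-1)*a^2*b*s^4*t*u*w*q + (-1)*a^3*s^2*t*u + (1)*a^3*s^2*t*u*w*p + (-1)*a^3*s^3*w + (1)*a^3*s^3*u*w*p + (1)*a^3*s^3*t^2*u*w*q + (-1)*a^3*s^4*t*u + (1)*a^3*s^4*t*u*w*q + (-1)*a^3*s^5*w) * hab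
      + ((2)*b*t^3*u + (2)*b*s*t^2*w + (1)*b*s^2*t*u + (1)*b*s^3*w + (-1)*b^3*t^3*u + (-1)*b^3*s*t^2*w + (-1)*a*t^3*u + (-1)*a*s*t^2*w + (-2)*a*s^2*t*u + (-2)*a*s^3*w + (1)*a^3*s^2*t*u + (1)*a^3*s^3*w) * hst
      + ((1)*b^2*t^2*u*w*p + (-1)*b^2*t^4*u + (1)*b^2*s*t*u*w*p + (-1)*b^2*s*t^3*w + (-1)*b^2*s*t^3*u + (1)*b^2*s*t^3*u*w*q + (-1)*b^2*s^2*t^2*w + (1)*b^2*s^2*t^2*u*w*q + (-1)*a*b*t^2*u*w*p + (-1)*a*b*t^4*u + (-1)*a*b*s*t^3*w + (-1)*a*b*s*t^3*u + (-1)*a*b*s*t^3*u*w*q + (1)*a*b*s^2*u*w*p + (-1)*a*b*s^2*t^2*w + (1)*a*b*s^2*t^2*u + (1)*a*b*s^3*t*w + (1)*a*b*s^3*t*u + (1)*a*b*s^3*t*u*w*q + (1)*a*b*s^4*w + (1)*a*b^2*t^2*u*ρ + (-1)*a*b^2*t^2*u*w*p*ρ + (1)*a*b^2*t^4*u*ρ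 + (1)*a*b^2*s*t*w*ρ + (1)*a*b^2*s*t*u*ρ + (-2)*a*b^2*s*t*u*w*p*ρ + (1)*a*b^2*s*t^3*w*ρ + (1)*a*b^2*s*t^3*u*ρ + (-1)*a*b^2*s*t^3*u*w*q*ρ + (1)*a*b^2*s^2*w*ρ + (-1)*a*b^2*s^2*u*w*p*ρ + (1)*a*b^2*s^2*t^2*w*ρ + (-2)*a*b^2*s^2*t^2*u*w*q*ρ + (-1)*a*b^2*s^3*t*u*w*q*ρ + (1)*a*b^3*t^2*u + (-1)*a*b^3*t^2*u*w*p + (1)*a*b^3*t^4*u + (1)*a*b^3*s*t*w + (-1)*a*b^3*s*t*u*w*p + (1)*a*b^3*s*t^3*w + (-1)*a*b^3*s*t^3*u*w*q + (-1)*a*b^3*s^2*t^2*u*w*q + (-1)*a^2*s*t*u*w*p + (-1)*a^2*s^2*u*w*p + (1)*a^2*s^2*t^2*u + (-1)*a^2*s^2*t^2*u*w*q + (1)*a^2*s^3*t*w + (1)*a^2*s^3*t*u + (-1)*a^2*s^3*t*u*w*q + (1)*a^2*s^4*w + (-1)*a^2*b*t^2*u*ρ + (1)*a^2*b*t^2*u*w*p*ρ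 + (-1)*a^2*b*s*t*w*ρ + (-1)*a^2*b*s*t*u*ρ + (2)*a^2*b*s*t*u*w*p*ρ + (1)*a^2*b*s*t^3*u*w*q*ρ + (-1)*a^2*b*s^2*w*ρ + (1)*a^2*b*s^2*u*w*p*ρ + (-1)*a^2*b*s^2*t^2*u*ρ + (2)*a^2*b*s^2*t^2*u*w*q*ρ + (-1)*a^2*b*s^3*t*w*ρ + (-1)*a^2*b*s^3*t*u*ρ + (1)*a^2*b*s^3*t*u*w*q*ρ + (-1)*a^2*b*s^4*w*ρ + (-1)*a^2*b^2*t^2*u + (1)*a^2*b^2*t^2*u*w*p + (-1)*a^2*b^2*s*t*w + (1)*a^2*b^2*s*t*u + (1)*a^2*b^2*s*t^3*u + (1)*a^2*b^2*s*t^3*u*w*q + (1)*a^2*b^2*s^2*w + (-1)*a^2*b^2*s^2*u*w*p + (1)*a^2*b^2*s^2*t^2*w + (-1)*a^2*b^2*s^2*t^2*u + (-1)*a^2*b^2*s^3*t*w + (-1)*a^2*b^2*s^3*t*u*w*q + (-1)*a^3*b*s*t*u + (1)*a^3*b*s*t*u*w*p + (-1)*a^3*b*s^2*w + (1)*a^3*b*s^2*u*w*p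 + (1)*a^3*b*s^2*t^2*u*w*q + (-1)*a^3*b*s^3*t*u + (1)*a^3*b*s^3*t*u*w*q + (-1)*a^3*b*s^4*w) * hG1
      + ((-1)*t^3*u + (-1)*s*t^2*w + (-2)*s*t^2*u + (-2)*s^2*t*w + (-1)*s^2*t*u + (-1)*s^3*w + (1)*b*t^3*u*ρ + (1)*b*s*t^2*w*ρ + (2)*b*s*t^2*u*ρ + (2)*b*s^2*t*w*ρ + (1)*b*s^2*t*u*ρ + (1)*b*s^3*w*ρ + (1)*a*t^3*u*ρ + (1)*a*s*t^2*w*ρ + (2)*a*s*t^2*u*ρ + (2)*a*s^2*t*w*ρ + (1)*a*s^2*t*u*ρ + (1)*a*s^3*w*ρ + (-1)*a*b*t^3*u*ρ^2 + (-1)*a*b*s*t^2*w*ρ^2 + (-2)*a*b*s*t^2*u*ρ^2 + (-2)*a*b*s^2*t*w*ρ^2 + (-1)*a*b*s^2*t*u*ρ^2 + (-1)*a*b*s^3*w*ρ^2) * hG2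
      + ((1)*b*s*t^2*w + (2)*b*s^2*t*w + (1)*b*s^3*w + (-1)*b^2*s*t^2*w*ρ + (-2)*b^2*s^2*t*w*ρ + (-1)*b^2*s^3*w*ρ + (-1)*a*s*t^2*w + (-2)*a*s^2*t*w + (-1)*a*s^3*w + (1)*a*b*s*t^2*w*ρ + (2)*a*b*s^2*t*w*ρ + (1)*a*b*s^3*w*ρ) * hgA
      + ((1)*b*t^3*u + (2)*b*s*t^2*u + (1)*b*s^2*t*u + (-1)*a*t^3*u + (-2)*a*s*t^2*u + (-1)*a*s^2*t*u + (-1)*a*b*t^3*u*ρ + (-2)*a*b*s*t^2*u*ρ + (-1)*a*b*s^2*t*u*ρ + (1)*a^2*t^3*u*ρ + (2)*a^2*s*t^2*u*ρ + (1)*a^2*s^2*t*u*ρ) * hgB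
      + ((1)*a*b*t^3*u*ρ + (2)*a*b*s*t^2*u*ρ + (1)*a*b*s^2*t*u*ρ + (-1)*a*b^2*t^3*u*ρ^2 + (-2)*a*b^2*s*t^2*u*ρ^2 + (-1)*a*b^2*s^2*t*u*ρ^2 + (-1)*a^2*t^3*u*ρ + (-2)*a^2*s*t^2*u*ρ + (-1)*a^2*s^2*t*u*ρ + (1)*a^2*b*t^3*u*ρ^2 + (2)*a^2*b*s*t^2*u*ρ^2 + (1)*a^2*b*s^2*t*u*ρ^2) * hgC
      + ((1)*b^2*s*t^2*w*ρ + (2)*b^2*s^2*t*w*ρ + (1)*b^2*s^3*w*ρ + (-1)*a*b*s*t^2*w*ρ + (-2)*a*b*s^2*t*w*ρ + (-1)*a*b*s^3*w*ρ + (-1)*a*b^2*s*t^2*w*ρ^2 + (-2)*a*b^2*s^2*t*w*ρ^2 + (-1)*a*b^2*s^3*w*ρ^2 + (1)*a^2*b*s*t^2*w*ρ^2 + (2)*a^2*b*s^2*t*w*ρ^2 + (1)*a^2*b*s^3*w*ρ^2) * hgD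
      + ((1)*b*t^2*lam + (2)*b*s*t*lam + (1)*b*s^2*lam + (-1)*b^2*t^2*ρ*lam + (-2)*b^2*s*t*ρ*lam + (-1)*b^2*s^2*ρ*lam + (-1)*a*t^2*lam + (-2)*a*s*t*lam + (-1)*a*s^2*lam + (1)*a*b^2*t^2*ρ^2*lam + (2)*a*b^2*s*t*ρ^2*lam + (1)*a*b^2*s^2*ρ^2*lam + (1)*a^2*t^2*ρ*lam + (2)*a^2*s*t*ρ*lam + (1)*a^2*s^2*ρ*lam + (-1)*a^2*b*t^2*ρ^2*lam + (-2)*a^2*b*s*t*ρ^2*lam + (-1)*a^2*b*s^2*ρ^2*lam) * hvj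


set_option maxHeartbeats 1000000 in
/-- type-2 eigenpair: if sin μ ≠ 0 and
ρ = cos((n+1)μ/2)/cos((n-1)μ/2) with nonzero denominator, then
λ = sin(nμ)/sin μ is an eigenvalue of Kₙ(ρ) with eigenvector
v_j = cos(μ(j - (n-1)/2)), provided v ≠ 0. -/
theorem stmt5 (n : ℕ) (hn : 2 ≤ n) (ρ μ : ℂ) (hμ : Complex.sin μ ≠ 0)
    (hden : Complex.cos ((n - 1) * μ / 2) ≠ 0)
    (hρ : ρ = Complex.cos ((n + 1) * μ / 2) / Complex.cos ((n - 1) * μ / 2))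
    (v : Fin n → ℂ)
    (hv : ∀ j : Fin n, v j = Complex.cos (μ * ((j : ℂ) - (n - 1) / 2)))
    (hv0 : v ≠ 0) :
    (KMS n ρ).mulVec v = (Complex.sin (n * μ) / Complex.sin μ) • v := by

  funext j
  simp only [Matrix.mulVec, dotProduct, KMS, Pi.smul_apply, smul_eq_mul]
  set a : ℂ := Complex.exp (μ * Complex.I) with ha_def
  set b : ℂ := Complex.exp (-(μ * Complex.I)) with hb_def
  set s : ℂ := Complex.exp (((n:ℂ) - 1) * μ / 2 * Complex.I) with hs_def
  set t : ℂ := Complex.exp (-(((n:ℂ) - 1) * μ / 2 * Complex.I)) with ht_def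
  set lam : ℂ := Complex.sin ((n:ℂ) * μ) / Complex.sin μ with hlam_def
  have ha0 : a ≠ 0 := Complex.exp_ne_zero _
  have hb0 : b ≠ 0 := Complex.exp_ne_zero _
  have hs0 : s ≠ 0 := Complex.exp_ne_zero _
  have ht0 : t ≠ 0 := Complex.exp_ne_zero _
  have hab : a * b = 1 := by rw [ha_def, hb_def, ← Complex.exp_add]; simp
  have hst : s * t = 1 := by rw [hs_def, ht_def, ← Complex.exp_add]; simp
  have hj1 : (j:ℕ) + 1 ≤ n := j.isLt
  set N : ℕ := n - ((j:ℕ)+1) with hN_def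
  -- cos/sin expansions
  have hcos_half : ∀ x : ℂ, Complex.cos x = (Complex.exp (x*Complex.I) + Complex.exp (-x*Complex.I))/2 := by
    intro x; have := Complex.two_cos x; linear_combination this/2
  have hsplus : 2 * Complex.cos (((n:ℂ)-1)*μ/2) = s + t := by
    rw [Complex.two_cos]
    have e1 : Complex.exp (-(((n:ℂ)-1)*μ/2) * Complex.I) = t := by rw [ht_def]; congr 1; ring
    rw [e1]
  have hcplus : 2 * Complex.cos (((n:ℂ)+1)*μ/2) = s*a + t*b := by
    rw [Complex.two_cos]
    have e1 : Complex.exp ((((n:ℂ)+1)*μ/2) * Complex.I) = s*a := by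
      rw [hs_def, ha_def, ← Complex.exp_add]; congr 1; ring
    have e2 : Complex.exp (-(((n:ℂ)+1)*μ/2) * Complex.I) = t*b := by
      rw [ht_def, hb_def, ← Complex.exp_add]; congr 1; ring
    rw [e1, e2]
  have hρcos : ρ * Complex.cos (((n:ℂ)-1)*μ/2) = Complex.cos (((n:ℂ)+1)*μ/2) := by
    rw [hρ]; exact div_mul_cancel₀ _ hden
  have hG1 : ρ*(s+t) = s*a + t*b := by linear_combination 2*hρcos - ρ*hsplus + hcplus
  have hsin : 2 * Complex.sin μ = (b - a) * Complex.I := by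
    rw [Complex.two_sin]
    have e1 : Complex.exp (-μ * Complex.I) = b := by rw [hb_def]; congr 1; ring
    rw [e1]
  have hsinn : 2 * Complex.sin ((n:ℂ)*μ) = (t^2*b - s^2*a) * Complex.I := by
    rw [Complex.two_sin]
    have e1 : Complex.exp (-((n:ℂ)*μ) * Complex.I) = t^2*b := by
      rw [ht_def, hb_def, pow_two, ← Complex.exp_add, ← Complex.exp_add]; congr 1; ring
    have e2 : Complex.exp (((n:ℂ)*μ) * Complex.I) = s^2*a := by
      rw [hs_def, ha_def, pow_two, ← Complex.exp_add, ← Complex.exp_add]; congr 1; ring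
    rw [e1, e2]
  have hlam' : lam * Complex.sin μ = Complex.sin ((n:ℂ)*μ) := div_mul_cancel₀ _ hμ
  have hI : Complex.I * Complex.I = -1 := Complex.I_mul_I
  have hG2 : lam*(a-b) = s^2*a - t^2*b := by
    linear_combination (2*Complex.I)*hlam' + (-(Complex.I)*lam)*hsin + Complex.I*hsinn
      - (lam*(b-a) - (t^2*b - s^2*a))*hI
  -- nonvanishing
  have hamb : a - b ≠ 0 := by
    intro h
    apply hμ
    have h2 : (2:ℂ) * Complex.sin μ = 0 := by
      rw [hsin, show b - a = -(a-b) by ring, h]; ring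
    simpa using h2
  have hbma : b - a ≠ 0 := fun h => hamb (by linear_combination -h)
  have hspt : s + t ≠ 0 := by
    intro h
    apply hden
    have h2 := hsplus
    rw [h] at h2
    simpa using h2
  have hρa : ρ*a - 1 ≠ 0 := by
    have key1 : (ρ*a-1)*(s+t) = s*a*(a-b) := by linear_combination a*hG1 + (s+t)*hab
    intro h
    rw [h, zero_mul] at key1
    exact (mul_ne_zero (mul_ne_zero hs0 ha0) hamb) key1.symm
  have hρb : ρ*b - 1 ≠ 0 := by
    have key2 : (ρ*b-1)*(s+t) = t*b*(b-a) := by linear_combination b*hG1 + (s+t)*hab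
    intro h
    rw [h, zero_mul] at key2
    exact (mul_ne_zero (mul_ne_zero ht0 hb0) hbma) key2.symm
  -- power identities
  have hn1 : 1 ≤ n := by omega
  have hs2 : a^(n-1) = s*s := by
    rw [ha_def, hs_def, ← Complex.exp_nat_mul, ← Complex.exp_add]
    congr 1
    push_cast [Nat.cast_sub hn1]
    ring
  have ht2 : b^(n-1) = t*t := by
    rw [hb_def, ht_def, ← Complex.exp_nat_mul, ← Complex.exp_add]
    congr 1
    push_cast [Nat.cast_sub hn1]
    ring
  have habj : a^(j:ℕ) * b^(j:ℕ) = 1 := by rw [← mul_pow, hab, one_pow]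
  have hNj : N + (j:ℕ) = n - 1 := by omega
  have haN : a^N = s^2*(b^(j:ℕ)) := by
    calc a^N = a^N * (a^(j:ℕ) * b^(j:ℕ)) := by rw [habj, mul_one]
    _ = a^(N+(j:ℕ)) * b^(j:ℕ) := by rw [pow_add]; ring
    _ = s^2*(b^(j:ℕ)) := by rw [hNj, hs2]; ring
  have hbN : b^N = t^2*(a^(j:ℕ)) := by
    calc b^N = b^N * (a^(j:ℕ) * b^(j:ℕ)) := by rw [habj, mul_one]
    _ = b^(N+(j:ℕ)) * a^(j:ℕ) := by rw [pow_add]; ring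
    _ = t^2*(a^(j:ℕ)) := by rw [hNj, ht2]; ring
  -- geometric sums
  have hgA : (∑ m ∈ Finset.range ((j:ℕ)+1), (ρ*a)^m) * (ρ*a-1) = ρ*(ρ^(j:ℕ))*(a*(a^(j:ℕ))) - 1 := by
    rw [geom_sum_mul, mul_pow, pow_succ, pow_succ]; ring
  have hgB : (∑ m ∈ Finset.range ((j:ℕ)+1), (ρ*b)^m) * (ρ*b-1) = ρ*(ρ^(j:ℕ))*(b*(b^(j:ℕ))) - 1 := by
    rw [geom_sum_mul, mul_pow, pow_succ, pow_succ]; ring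
  have hgC : (∑ m ∈ Finset.range N, (ρ*a)^m) * (ρ*a-1) = (ρ^N)*(s^2*(b^(j:ℕ))) - 1 := by
    rw [geom_sum_mul, mul_pow, haN]
  have hgD : (∑ m ∈ Finset.range N, (ρ*b)^m) * (ρ*b-1) = (ρ^N)*(t^2*(a^(j:ℕ))) - 1 := by
    rw [geom_sum_mul, mul_pow, hbN]
  -- eigenvector component
  have hvj : 2 * v j = (a^(j:ℕ))*t + (b^(j:ℕ))*s := by
    rw [hv j, Complex.two_cos]
    have e1 : Complex.exp ((μ*(((j:ℕ):ℂ) - ((n:ℂ)-1)/2)) * Complex.I) = (a^(j:ℕ))*t := by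
      rw [ha_def, ht_def, ← Complex.exp_nat_mul, ← Complex.exp_add]; congr 1; ring
    have e2 : Complex.exp (-(μ*(((j:ℕ):ℂ) - ((n:ℂ)-1)/2)) * Complex.I) = (b^(j:ℕ))*s := by
      rw [hb_def, hs_def, ← Complex.exp_nat_mul, ← Complex.exp_add]; congr 1; ring
    rw [e1, e2]
  -- the summand function
  set g : ℕ → ℂ := fun k => ρ ^ ((((j:ℕ):ℤ) - (k:ℤ)).natAbs) * Complex.cos (μ*((k:ℂ) - ((n:ℂ)-1)/2)) with hg_def
  have hfin : ∑ x : Fin n, ρ ^ ((((j:ℕ):ℤ) - ((x:ℕ):ℤ)).natAbs) * v x = ∑ k ∈ Finset.range n, g k := by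
    rw [← Fin.sum_univ_eq_sum_range]
    exact Finset.sum_congr rfl (fun x _ => by simp only [hv x, hg_def])
  have hsplit : ∑ k ∈ Finset.range n, g k
      = ∑ k ∈ Finset.range ((j:ℕ)+1), g k + ∑ k ∈ Finset.Ico ((j:ℕ)+1) n, g k := by
    rw [Finset.range_eq_Ico, ← Finset.sum_Ico_consecutive g (Nat.zero_le _) hj1, Finset.range_eq_Ico]
  have h1 : ∑ k ∈ Finset.range ((j:ℕ)+1), g k
      = (a^(j:ℕ))*t/2*(∑ m ∈ Finset.range ((j:ℕ)+1), (ρ*b)^m)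
      + (b^(j:ℕ))*s/2*(∑ m ∈ Finset.range ((j:ℕ)+1), (ρ*a)^m) := by
    rw [← Finset.sum_range_reflect]
    have hpt : ∀ m ∈ Finset.range ((j:ℕ)+1),
        g ((j:ℕ)+1-1-m) = (a^(j:ℕ))*t/2*(ρ*b)^m + (b^(j:ℕ))*s/2*(ρ*a)^m := by
      intro m hm
      have hm' : m ≤ (j:ℕ) := by simpa [Nat.lt_succ_iff] using Finset.mem_range.mp hm
      have hidx : (j:ℕ)+1-1-m = (j:ℕ)-m := by omega
      rw [hidx]; simp only [hg_def]
      have hna : ((((j:ℕ)):ℤ) - ((((j:ℕ)-m : ℕ)):ℤ)).natAbs = m := by omega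
      rw [hna]
      have hcast : ((((j:ℕ)-m : ℕ)):ℂ) = (((j:ℕ)):ℂ) - (m:ℂ) := by
        push_cast [Nat.cast_sub hm']; ring
      rw [hcast, hcos_half]
      have e1 : Complex.exp ((μ*((((j:ℕ)):ℂ) - (m:ℂ) - ((n:ℂ)-1)/2)) * Complex.I)
          = (a^(j:ℕ))*(b^m)*t := by
        rw [ha_def, hb_def, ht_def, ← Complex.exp_nat_mul, ← Complex.exp_nat_mul,
          ← Complex.exp_add, ← Complex.exp_add]
        congr 1; ring
      have e2 : Complex.exp (-(μ*((((j:ℕ)):ℂ) - (m:ℂ) - ((n:ℂ)-1)/2)) * Complex.I)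
          = (b^(j:ℕ))*(a^m)*s := by
        rw [ha_def, hb_def, hs_def, ← Complex.exp_nat_mul, ← Complex.exp_nat_mul,
          ← Complex.exp_add, ← Complex.exp_add]
        congr 1; ring
      rw [e1, e2, mul_pow, mul_pow]
      ring
    rw [Finset.sum_congr rfl hpt, Finset.sum_add_distrib, ← Finset.mul_sum, ← Finset.mul_sum]
  have h2 : ∑ k ∈ Finset.Ico ((j:ℕ)+1) n, g k
      = ρ*((a^(j:ℕ))*a*t/2*(∑ m ∈ Finset.range N, (ρ*a)^m)
          + (b^(j:ℕ))*b*s/2*(∑ m ∈ Finset.range N, (ρ*b)^m)) := by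
    rw [Finset.sum_Ico_eq_sum_range]
    have hpt : ∀ m ∈ Finset.range (n - ((j:ℕ)+1)),
        g ((j:ℕ)+1+m) = ρ*((a^(j:ℕ))*a*t/2*(ρ*a)^m + (b^(j:ℕ))*b*s/2*(ρ*b)^m) := by
      intro m hm
      simp only [hg_def]
      have hna : ((((j:ℕ)):ℤ) - ((((j:ℕ)+1+m : ℕ)):ℤ)).natAbs = m+1 := by omega
      rw [hna]
      have hcast : ((((j:ℕ)+1+m : ℕ)):ℂ) = (((j:ℕ)):ℂ) + 1 + (m:ℂ) := by push_cast; ring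
      rw [hcast, hcos_half]
      have e1 : Complex.exp ((μ*((((j:ℕ)):ℂ) + 1 + (m:ℂ) - ((n:ℂ)-1)/2)) * Complex.I)
          = (a^(j:ℕ))*a*(a^m)*t := by
        rw [ha_def, ht_def, ← Complex.exp_nat_mul, ← Complex.exp_nat_mul,
          ← Complex.exp_add, ← Complex.exp_add, ← Complex.exp_add]
        congr 1; ring
      have e2 : Complex.exp (-(μ*((((j:ℕ)):ℂ) + 1 + (m:ℂ) - ((n:ℂ)-1)/2)) * Complex.I)
          = (b^(j:ℕ))*b*(b^m)*s := by
        rw [hb_def, hs_def, ← Complex.exp_nat_mul, ← Complex.exp_nat_mul,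
          ← Complex.exp_add, ← Complex.exp_add, ← Complex.exp_add]
        congr 1; ring
      rw [e1, e2, mul_pow, mul_pow, pow_succ]
      ring
    rw [Finset.sum_congr rfl hpt, ← Finset.mul_sum, Finset.sum_add_distrib, ← Finset.mul_sum,
      ← Finset.mul_sum]
  have hsum : ∑ x : Fin n, ρ ^ ((((j:ℕ):ℤ) - ((x:ℕ):ℤ)).natAbs) * v x
      = (a^(j:ℕ))*t/2*(∑ m ∈ Finset.range ((j:ℕ)+1), (ρ*b)^m)
      + (b^(j:ℕ))*s/2*(∑ m ∈ Finset.range ((j:ℕ)+1), (ρ*a)^m)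
      + ρ*((a^(j:ℕ))*a*t/2*(∑ m ∈ Finset.range N, (ρ*a)^m)
          + (b^(j:ℕ))*b*s/2*(∑ m ∈ Finset.range N, (ρ*b)^m)) := by
    rw [hfin, hsplit, h1, h2]
  have hC : (2*(a-b)*(s+t)^2*((ρ*a-1)*(ρ*b-1))) ≠ 0 := by
    refine mul_ne_zero (mul_ne_zero (mul_ne_zero two_ne_zero hamb) (pow_ne_zero _ hspt))
      (mul_ne_zero hρa hρb)
  apply mul_left_cancel₀ hC
  rw [hsum]
  exact rowkey a b s t (a^(j:ℕ)) (b^(j:ℕ)) (ρ^(j:ℕ)) (ρ^N) ρ lam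
    (∑ m ∈ Finset.range ((j:ℕ)+1), (ρ*a)^m) (∑ m ∈ Finset.range ((j:ℕ)+1), (ρ*b)^m)
    (∑ m ∈ Finset.range N, (ρ*a)^m) (∑ m ∈ Finset.range N, (ρ*b)^m) (v j)
    hab hst hG1 hG2 hgA hgB hgC hgD hvj
end

section
/- Let n ≥ 3 be odd and let xₙ > 1 satisfy Tₙ(xₙ) = nxₙ. Then U_{n-1}(i√(xₙ² - 1)) = (-1)^((n-1)/2) · n, where U_{n-1} is the Chebyshev polynomial of the second kind and i the imaginary unit. -/
/-- For odd n ≥ 3 and xₙ > 1 with Tₙ(xₙ) = n xₙ, one has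
U_{n-1}(i √(xₙ² - 1)) = (-1)^((n-1)/2) n. -/
theorem stmt12 (n : ℕ) (hn : 3 ≤ n) (hodd : Odd n) (x : ℝ) (hx : 1 < x)
    (hT : (Polynomial.Chebyshev.T ℝ n).eval x = n * x) :
    (Polynomial.Chebyshev.U ℂ ((n : ℤ) - 1)).eval (Complex.I * Real.sqrt (x ^ 2 - 1))
      = (-1) ^ ((n - 1) / 2) * n := by
  obtain ⟨m, hm⟩ := hodd
  have hx0 : (x:ℂ) ≠ 0 := by
    simpa using (by positivity : x ≠ 0)
  set s : ℂ := Complex.I * Real.sqrt (x ^ 2 - 1) with hs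
  have hsq : (0:ℝ) ≤ x ^ 2 - 1 := by nlinarith
  have hs2 : s ^ 2 = 1 - (x:ℂ) ^ 2 := by
    rw [hs, mul_pow, Complex.I_sq, ← Complex.ofReal_pow, Real.sq_sqrt hsq]
    push_cast; ring
  obtain ⟨z₀, hz₀⟩ := Complex.cos_surjective (x:ℂ)
  have hsin2 : (Complex.sin z₀ - s) * (Complex.sin z₀ + s) = 0 := by
    have h := Complex.sin_sq_add_cos_sq z₀
    rw [hz₀] at h
    linear_combination h - hs2
  -- choose z with cos z = x and sin z = s
  obtain ⟨z, hz, hsz⟩ : ∃ z, Complex.cos z = (x:ℂ) ∧ Complex.sin z = s := by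
    rcases mul_eq_zero.mp hsin2 with h | h
    · exact ⟨z₀, hz₀, sub_eq_zero.mp h⟩
    · refine ⟨-z₀, by simp [hz₀], ?_⟩
      rw [Complex.sin_neg]; linear_combination -h
  have hcos : Complex.cos ((n:ℤ) * z) = (n:ℂ) * x := by
    have h1 := Polynomial.Chebyshev.T_complex_cos z (n:ℤ)
    rw [hz] at h1
    have h2 : ((((Polynomial.Chebyshev.T ℝ n).eval x : ℝ)) : ℂ)
        = (Polynomial.Chebyshev.T ℂ (n:ℤ)).eval (x:ℂ) := by
      rw [← Polynomial.Chebyshev.map_T (algebraMap ℝ ℂ), Polynomial.eval_map,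
        show ((x:ℂ)) = algebraMap ℝ ℂ x from rfl, Polynomial.eval₂_at_apply]
      rfl
    rw [← h1, ← h2, hT]
    push_cast; ring
  have hcosm : Complex.cos ((m:ℂ) * (Real.pi:ℂ)) = (-1)^m := by
    have h := Real.cos_nat_mul_pi_sub 0 m
    simp only [sub_zero, Real.cos_zero, mul_one] at h
    rw [show ((m:ℂ) * (Real.pi:ℂ)) = ((m * Real.pi : ℝ):ℂ) by push_cast; ring,
      ← Complex.ofReal_cos, h]
    push_cast; ring
  have hU := Polynomial.Chebyshev.U_complex_cos ((Real.pi:ℂ)/2 - z) ((n:ℤ) - 1)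
  rw [Complex.cos_pi_div_two_sub, Complex.sin_pi_div_two_sub, hz, hsz] at hU
  push_cast at hcos
  have harg : ((n:ℂ) - 1 + 1) * ((Real.pi:ℂ)/2 - z)
      = (m:ℂ) * (Real.pi:ℂ) + ((Real.pi:ℂ)/2 - (n:ℂ) * z) := by
    push_cast [hm]; ring
  push_cast at hU
  rw [harg, Complex.sin_add, Complex.sin_nat_mul_pi, Complex.sin_pi_div_two_sub,
    hcosm, hcos, zero_mul, zero_add] at hU
  have hm2 : (n - 1) / 2 = m := by omega
  rw [hm2]
  exact mul_right_cancel₀ hx0 (by linear_combination hU :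
    (Polynomial.Chebyshev.U ℂ ((n : ℤ) - 1)).eval s * (x:ℂ) = ((-1)^m * n) * x)
end

section
/- For even k ≥ 0 and z ∈ ℂ with z ≠ 0, Uₖ(√(1 - z²)) = (-1)^{k/2} z^{-1} T_{k+1}(z), and for odd k ≥ 1, Uₖ(√(1 - z²)) = (-1)^{(k-1)/2} (√(1 - z²)/z) Uₖ(z), for any fixed choice of the complex square root √(1 - z²). -/
open Polynomial Polynomial.Chebyshev

lemma Taux (n : ℤ) : T ℂ (n+2) = T ℂ n - 2*(1 - X^2) * U ℂ n := by
  linear_combination 2*(T_eq_X_mul_T_sub_pol_U ℂ n) - (T_add_two ℂ n)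

lemma Uaux (n : ℤ) : U ℂ (n+2) = U ℂ n + 2 * T ℂ (n+2) := by
  have h := T_eq_U_sub_X_mul_U ℂ (n+2)
  rw [show n+2-1 = n+1 by ring] at h
  linear_combination -(U_add_two ℂ n) - 2*h

lemma aux (z s : ℂ) (hz : z ≠ 0) (hs : s ^ 2 = 1 - z ^ 2) (m : ℕ) :
    (U ℂ (2*m)).eval s = (-1)^m * z⁻¹ * (T ℂ (2*m+1)).eval z ∧
    (U ℂ (2*m+1)).eval s = (-1)^m * (s/z) * (U ℂ (2*m+1)).eval z := by
  induction m with
  | zero =>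
    simp only [Nat.cast_zero, mul_zero, zero_add, U_zero, U_one, T_one, eval_one,
      eval_mul, eval_ofNat, eval_X, pow_zero, one_mul]
    constructor
    · field_simp
    · field_simp
  | succ m ih =>
    obtain ⟨hA, hB⟩ := ih
    set n : ℤ := 2*(m:ℤ) with hn
    have hL1 : (U ℂ (n+2)).eval s = 2*s*(U ℂ (n+1)).eval s - (U ℂ n).eval s := by
      rw [U_add_two ℂ n]; simp
    have hTz : (T ℂ (n+2+1)).eval z
        = (T ℂ (n+1)).eval z - 2*(1-z^2)*(U ℂ (n+1)).eval z := by
      rw [show n+2+1 = (n+1)+2 by ring, Taux (n+1)]; simp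
    have hA' : (U ℂ (n+2)).eval s = (-1)^(m+1) * z⁻¹ * (T ℂ (n+2+1)).eval z := by
      rw [hL1, hA, hB, hTz]
      linear_combination (2 * (-1)^m * (U ℂ (n+1)).eval z * z⁻¹) * hs
    have hRz : (U ℂ (n+2+1)).eval z
        = (U ℂ (n+1)).eval z + 2*(T ℂ (n+2+1)).eval z := by
      rw [show n+2+1 = (n+1)+2 by ring, Uaux (n+1)]; simp
    have hL2 : (U ℂ (n+2+1)).eval s = 2*s*(U ℂ (n+2)).eval s - (U ℂ (n+1)).eval s := by
      rw [show n+2+1 = (n+1)+2 by ring, U_add_two ℂ (n+1),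
        show n+1+1 = n+2 by ring]; simp
    have hB' : (U ℂ (n+2+1)).eval s = (-1)^(m+1) * (s/z) * (U ℂ (n+2+1)).eval z := by
      rw [hL2, hA', hB, hRz]
      ring
    constructor
    · push_cast
      rw [show 2*((m:ℤ)+1) = n+2 by rw [hn]; ring]
      exact hA'
    · push_cast
      rw [show 2*((m:ℤ)+1)+1 = n+2+1 by rw [hn]; ring]
      exact hB'

/-- for any s with s² = 1 - z² and z ≠ 0:
even k: Uₖ(s) = (-1)^{k/2} z⁻¹ T_{k+1}(z);
odd k:  Uₖ(s) = (-1)^{(k-1)/2} (s/z) Uₖ(z). -/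
theorem stmt15 (k : ℕ) (z s : ℂ) (hz : z ≠ 0) (hs : s ^ 2 = 1 - z ^ 2) :
    (Even k → (Polynomial.Chebyshev.U ℂ k).eval s
        = (-1) ^ (k / 2) * z⁻¹ * (Polynomial.Chebyshev.T ℂ (k + 1)).eval z) ∧
    (Odd k → (Polynomial.Chebyshev.U ℂ k).eval s
        = (-1) ^ ((k - 1) / 2) * (s / z) * (Polynomial.Chebyshev.U ℂ k).eval z) := by
  constructor
  · rintro ⟨m, rfl⟩
    have := (aux z s hz hs m).1
    rw [show m + m = 2*m by ring, Nat.mul_div_cancel_left m (by norm_num)]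
    push_cast at this ⊢
    exact this
  · rintro ⟨m, rfl⟩
    have := (aux z s hz hs m).2
    rw [show (2*m+1-1)/2 = m by omega]
    push_cast at this ⊢
    exact this
end
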